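/- Under the Legendre transformation ζ₁ = ψ_q, ζ̄₁ = ψ_{q̄}, u = qψ_q + q̄ψ_{q̄} − ψ, u_{ζ₁} = q, u_{ζ̄₁} = q̄ (with z₂ = z, z̄₂ = z̄), the equation u_{ζ₁ζ̄₁}u_{2 2̄} − u_{ζ₁2̄}u_{ζ̄₁2} = −e^{ζ₁+ζ̄₁} transforms into ψ_{q q̄}ψ_{z z̄} − ψ_{q z̄}ψ_{q̄ z} = e^{ψ_q + ψ_{q̄}}(ψ_{q q̄}² − ψ_{qq}ψ_{q̄ q̄}). Specifically, if ψ is a smooth function with nondegenerate Hessian in (q, q̄) (so the Legendre transform is well-defined locally) and u is its Legendre transform, then u satisfies the first equation if and only if ψ satisfies the second. -/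

import Mathlib

noncomputable section

/-- Functions of the four independent complex variables (z₁, z̄₁, z₂, z̄₂). -/
abbrev F4 := ℂ → ℂ → ℂ → ℂ → ℂ

/-- Partial derivative in the 1st slot (z₁, resp. q). -/
def D1 (f : F4) : F4 := fun a b c d => deriv (fun t => f t b c d) a
/-- Partial derivative in the 2nd slot (z̄₁, resp. q̄). -/
def D2 (f : F4) : F4 := fun a b c d => deriv (fun t => f a t c d) b
/-- Partial derivative in the 3rd slot (z₂, resp. z). -/
def D3 (f : F4) : F4 := fun a b c d => deriv (fun t => f a b t d) c
/-- Partial derivative in the 4th slot (z̄₂, resp. z̄). -/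
def D4 (f : F4) : F4 := fun a b c d => deriv (fun t => f a b c t) d

/-- Smoothness of a function of the four complex variables. -/
def Sm (f : F4) : Prop :=
  ContDiff ℂ ⊤ (fun p : ℂ × ℂ × ℂ × ℂ => f p.1 p.2.1 p.2.2.1 p.2.2.2)

abbrev P4 := ℂ × ℂ × ℂ × ℂ
def unc (f : F4) : P4 → ℂ := fun p => f p.1 p.2.1 p.2.2.1 p.2.2.2
def e1 : P4 := (1,0,0,0)
def e2 : P4 := (0,1,0,0)
def e3 : P4 := (0,0,1,0)
def e4 : P4 := (0,0,0,1)

lemma Sm.unc {f : F4} (hf : Sm f) : ContDiff ℂ ⊤ (unc f) := hf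

-- the slice maps as HasDerivAt into P4
lemma slice1 (a b c d : ℂ) : HasDerivAt (fun t : ℂ => ((t,b,c,d) : P4)) e1 a := by
  exact (hasDerivAt_id a).prodMk (((hasDerivAt_const a b).prodMk
    ((hasDerivAt_const a c).prodMk (hasDerivAt_const a d))))
lemma slice2 (a b c d : ℂ) : HasDerivAt (fun t : ℂ => ((a,t,c,d) : P4)) e2 b :=
  (hasDerivAt_const b a).prodMk ((hasDerivAt_id b).prodMk
    ((hasDerivAt_const b c).prodMk (hasDerivAt_const b d)))
lemma slice3 (a b c d : ℂ) : HasDerivAt (fun t : ℂ => ((a,b,t,d) : P4)) e3 c :=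
  (hasDerivAt_const c a).prodMk ((hasDerivAt_const c b).prodMk
    ((hasDerivAt_id c).prodMk (hasDerivAt_const c d)))
lemma slice4 (a b c d : ℂ) : HasDerivAt (fun t : ℂ => ((a,b,c,t) : P4)) e4 d :=
  (hasDerivAt_const d a).prodMk ((hasDerivAt_const d b).prodMk
    ((hasDerivAt_const d c).prodMk (hasDerivAt_id d)))

lemma hasF {f : F4} (hf : Sm f) (p : P4) :
    HasFDerivAt (unc f) (fderiv ℂ (unc f) p) p :=
  (hf.differentiable (by simp) p).hasFDerivAt

lemma D1_eq {f : F4} (hf : Sm f) (a b c d : ℂ) :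
    D1 f a b c d = fderiv ℂ (unc f) (a,b,c,d) e1 := by
  have h := (hasF hf (a,b,c,d)).comp_hasDerivAt a (slice1 a b c d)
  exact h.deriv
lemma D2_eq {f : F4} (hf : Sm f) (a b c d : ℂ) :
    D2 f a b c d = fderiv ℂ (unc f) (a,b,c,d) e2 := by
  have h := (hasF hf (a,b,c,d)).comp_hasDerivAt b (slice2 a b c d)
  exact h.deriv
lemma D3_eq {f : F4} (hf : Sm f) (a b c d : ℂ) :
    D3 f a b c d = fderiv ℂ (unc f) (a,b,c,d) e3 := by
  have h := (hasF hf (a,b,c,d)).comp_hasDerivAt c (slice3 a b c d)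
  exact h.deriv
lemma D4_eq {f : F4} (hf : Sm f) (a b c d : ℂ) :
    D4 f a b c d = fderiv ℂ (unc f) (a,b,c,d) e4 := by
  have h := (hasF hf (a,b,c,d)).comp_hasDerivAt d (slice4 a b c d)
  exact h.deriv

-- decomposition of a vector
lemma vec_decomp (v : P4) : v = v.1 • e1 + v.2.1 • e2 + v.2.2.1 • e3 + v.2.2.2 • e4 := by
  simp [e1, e2, e3, e4, Prod.ext_iff]

/-- Chain rule for a smooth function of 4 complex variables along a curve. -/
lemma chain4 {f : F4} (hf : Sm f) {g1 g2 g3 g4 : ℂ → ℂ} {g1' g2' g3' g4' : ℂ} {t : ℂ}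
    (h1 : HasDerivAt g1 g1' t) (h2 : HasDerivAt g2 g2' t)
    (h3 : HasDerivAt g3 g3' t) (h4 : HasDerivAt g4 g4' t) :
    HasDerivAt (fun s => f (g1 s) (g2 s) (g3 s) (g4 s))
      (D1 f (g1 t) (g2 t) (g3 t) (g4 t) * g1' +
       D2 f (g1 t) (g2 t) (g3 t) (g4 t) * g2' +
       D3 f (g1 t) (g2 t) (g3 t) (g4 t) * g3' +
       D4 f (g1 t) (g2 t) (g3 t) (g4 t) * g4') t := by
  set p : P4 := (g1 t, g2 t, g3 t, g4 t) with hp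
  have hg : HasDerivAt (fun s => ((g1 s, g2 s, g3 s, g4 s) : P4))
      ((g1', g2', g3', g4') : P4) t := h1.prodMk (h2.prodMk (h3.prodMk h4))
  have h := (hasF hf p).comp_hasDerivAt t hg
  have hv : fderiv ℂ (unc f) p ((g1', g2', g3', g4') : P4) =
      D1 f (g1 t) (g2 t) (g3 t) (g4 t) * g1' +
      D2 f (g1 t) (g2 t) (g3 t) (g4 t) * g2' +
      D3 f (g1 t) (g2 t) (g3 t) (g4 t) * g3' +
      D4 f (g1 t) (g2 t) (g3 t) (g4 t) * g4' := by
    rw [D1_eq hf, D2_eq hf, D3_eq hf, D4_eq hf]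
    conv_lhs => rw [vec_decomp ((g1', g2', g3', g4') : P4)]
    simp [smul_eq_mul]; ring
  rw [hv] at h
  exact h
lemma fderiv_smooth {f : F4} (hf : Sm f) :
    ContDiff ℂ ⊤ (fderiv ℂ (unc f)) := by
  exact (hf.unc.fderiv_right (le_refl _))

lemma fd_apply_smooth {f : F4} (hf : Sm f) (v : P4) :
    ContDiff ℂ ⊤ (fun p => fderiv ℂ (unc f) p v) :=
  (ContinuousLinearMap.apply ℂ ℂ v).contDiff.comp (fderiv_smooth hf)

lemma smD1 {f : F4} (hf : Sm f) : Sm (D1 f) := by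
  have : (fun p : P4 => D1 f p.1 p.2.1 p.2.2.1 p.2.2.2) =
      fun p => fderiv ℂ (unc f) p e1 := by
    funext p; exact D1_eq hf p.1 p.2.1 p.2.2.1 p.2.2.2
  unfold Sm; rw [this]; exact fd_apply_smooth hf e1
lemma smD2 {f : F4} (hf : Sm f) : Sm (D2 f) := by
  have : (fun p : P4 => D2 f p.1 p.2.1 p.2.2.1 p.2.2.2) =
      fun p => fderiv ℂ (unc f) p e2 := by
    funext p; exact D2_eq hf p.1 p.2.1 p.2.2.1 p.2.2.2
  unfold Sm; rw [this]; exact fd_apply_smooth hf e2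
lemma smD3 {f : F4} (hf : Sm f) : Sm (D3 f) := by
  have : (fun p : P4 => D3 f p.1 p.2.1 p.2.2.1 p.2.2.2) =
      fun p => fderiv ℂ (unc f) p e3 := by
    funext p; exact D3_eq hf p.1 p.2.1 p.2.2.1 p.2.2.2
  unfold Sm; rw [this]; exact fd_apply_smooth hf e3
lemma smD4 {f : F4} (hf : Sm f) : Sm (D4 f) := by
  have : (fun p : P4 => D4 f p.1 p.2.1 p.2.2.1 p.2.2.2) =
      fun p => fderiv ℂ (unc f) p e4 := by
    funext p; exact D4_eq hf p.1 p.2.1 p.2.2.1 p.2.2.2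
  unfold Sm; rw [this]; exact fd_apply_smooth hf e4

lemma sym_aux {f : F4} (hf : Sm f) (p v w : P4) :
    fderiv ℂ (fun q => fderiv ℂ (unc f) q v) p w =
    fderiv ℂ (fun q => fderiv ℂ (unc f) q w) p v := by
  have hd : ∀ y, HasFDerivAt (unc f) (fderiv ℂ (unc f) y) y := fun y => hasF hf y
  have h2 : HasFDerivAt (fderiv ℂ (unc f)) (fderiv ℂ (fderiv ℂ (unc f)) p) p :=
    ((fderiv_smooth hf).differentiable (by simp) p).hasFDerivAt
  have hsym := second_derivative_symmetric hd h2 v w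
  have ev : ∀ x : P4, fderiv ℂ (fun q => fderiv ℂ (unc f) q x) p =
      (ContinuousLinearMap.apply ℂ ℂ x).comp (fderiv ℂ (fderiv ℂ (unc f)) p) := by
    intro x
    exact (((ContinuousLinearMap.apply ℂ ℂ x).hasFDerivAt.comp p h2)).fderiv
  rw [ev v, ev w]
  simpa using hsym.symm
lemma unc_D1 {f : F4} (hf : Sm f) : unc (D1 f) = fun q => fderiv ℂ (unc f) q e1 :=
  funext fun p => D1_eq hf p.1 p.2.1 p.2.2.1 p.2.2.2
lemma unc_D2 {f : F4} (hf : Sm f) : unc (D2 f) = fun q => fderiv ℂ (unc f) q e2 :=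
  funext fun p => D2_eq hf p.1 p.2.1 p.2.2.1 p.2.2.2
lemma unc_D3 {f : F4} (hf : Sm f) : unc (D3 f) = fun q => fderiv ℂ (unc f) q e3 :=
  funext fun p => D3_eq hf p.1 p.2.1 p.2.2.1 p.2.2.2
lemma unc_D4 {f : F4} (hf : Sm f) : unc (D4 f) = fun q => fderiv ℂ (unc f) q e4 :=
  funext fun p => D4_eq hf p.1 p.2.1 p.2.2.1 p.2.2.2

lemma sym12 {f : F4} (hf : Sm f) (a b c d : ℂ) :
    D1 (D2 f) a b c d = D2 (D1 f) a b c d := by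
  rw [D1_eq (smD2 hf), D2_eq (smD1 hf), unc_D1 hf, unc_D2 hf]
  exact sym_aux hf _ e2 e1
lemma sym13 {f : F4} (hf : Sm f) (a b c d : ℂ) :
    D1 (D3 f) a b c d = D3 (D1 f) a b c d := by
  rw [D1_eq (smD3 hf), D3_eq (smD1 hf), unc_D1 hf, unc_D3 hf]
  exact sym_aux hf _ e3 e1
lemma sym23 {f : F4} (hf : Sm f) (a b c d : ℂ) :
    D2 (D3 f) a b c d = D3 (D2 f) a b c d := by
  rw [D2_eq (smD3 hf), D3_eq (smD2 hf), unc_D2 hf, unc_D3 hf]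
  exact sym_aux hf _ e3 e2

lemma hasD1 {f : F4} (hf : Sm f) (a b c d : ℂ) :
    HasDerivAt (fun t => f t b c d) (D1 f a b c d) a := by
  have h := (hasF hf (a,b,c,d)).comp_hasDerivAt a (slice1 a b c d)
  rw [← D1_eq hf] at h; exact h
lemma hasD2 {f : F4} (hf : Sm f) (a b c d : ℂ) :
    HasDerivAt (fun t => f a t c d) (D2 f a b c d) b := by
  have h := (hasF hf (a,b,c,d)).comp_hasDerivAt b (slice2 a b c d)
  rw [← D2_eq hf] at h; exact h
lemma hasD3 {f : F4} (hf : Sm f) (a b c d : ℂ) :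
    HasDerivAt (fun t => f a b t d) (D3 f a b c d) c := by
  have h := (hasF hf (a,b,c,d)).comp_hasDerivAt c (slice3 a b c d)
  rw [← D3_eq hf] at h; exact h
lemma hasD4 {f : F4} (hf : Sm f) (a b c d : ℂ) :
    HasDerivAt (fun t => f a b c t) (D4 f a b c d) d := by
  have h := (hasF hf (a,b,c,d)).comp_hasDerivAt d (slice4 a b c d)
  rw [← D4_eq hf] at h; exact h

section main
variable (ψ Q Qb u : F4)

lemma Du1 (hψ : Sm ψ) (hQ : Sm Q) (hQb : Sm Qb)
    (hinv1 : ∀ ζ ζb z w : ℂ, D1 ψ (Q ζ ζb z w) (Qb ζ ζb z w) z w = ζ)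
    (hinv2 : ∀ ζ ζb z w : ℂ, D2 ψ (Q ζ ζb z w) (Qb ζ ζb z w) z w = ζb)
    (hu : ∀ ζ ζb z w : ℂ, u ζ ζb z w =
      Q ζ ζb z w * ζ + Qb ζ ζb z w * ζb - ψ (Q ζ ζb z w) (Qb ζ ζb z w) z w)
    (a b c d : ℂ) : D1 u a b c d = Q a b c d := by
  have e : (fun t => u t b c d) =
      fun t => Q t b c d * t + Qb t b c d * b - ψ (Q t b c d) (Qb t b c d) c d :=
    funext fun t => hu t b c d
  have h := (((hasD1 hQ a b c d).mul (hasDerivAt_id a)).add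
      ((hasD1 hQb a b c d).mul_const b)).sub
      (chain4 hψ (hasD1 hQ a b c d) (hasD1 hQb a b c d)
        (hasDerivAt_const a c) (hasDerivAt_const a d))
  have hv := h.deriv
  simp only [id_eq] at hv
  replace hv := (congrArg (deriv · a) e).trans hv
  show deriv (fun t => u t b c d) a = Q a b c d
  rw [hv, hinv1 a b c d, hinv2 a b c d]
  ring

lemma Du2 (hψ : Sm ψ) (hQ : Sm Q) (hQb : Sm Qb)
    (hinv1 : ∀ ζ ζb z w : ℂ, D1 ψ (Q ζ ζb z w) (Qb ζ ζb z w) z w = ζ)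
    (hinv2 : ∀ ζ ζb z w : ℂ, D2 ψ (Q ζ ζb z w) (Qb ζ ζb z w) z w = ζb)
    (hu : ∀ ζ ζb z w : ℂ, u ζ ζb z w =
      Q ζ ζb z w * ζ + Qb ζ ζb z w * ζb - ψ (Q ζ ζb z w) (Qb ζ ζb z w) z w)
    (a b c d : ℂ) : D2 u a b c d = Qb a b c d := by
  have e : (fun t => u a t c d) =
      fun t => Q a t c d * a + Qb a t c d * t - ψ (Q a t c d) (Qb a t c d) c d :=
    funext fun t => hu a t c d
  have h := (((hasD2 hQ a b c d).mul_const a).add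
      ((hasD2 hQb a b c d).mul (hasDerivAt_id b))).sub
      (chain4 hψ (hasD2 hQ a b c d) (hasD2 hQb a b c d)
        (hasDerivAt_const b c) (hasDerivAt_const b d))
  have hv := h.deriv
  simp only [id_eq] at hv
  replace hv := (congrArg (deriv · b) e).trans hv
  show deriv (fun t => u a t c d) b = Qb a b c d
  rw [hv, hinv1 a b c d, hinv2 a b c d]
  ring

lemma Du3 (hψ : Sm ψ) (hQ : Sm Q) (hQb : Sm Qb)
    (hinv1 : ∀ ζ ζb z w : ℂ, D1 ψ (Q ζ ζb z w) (Qb ζ ζb z w) z w = ζ)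
    (hinv2 : ∀ ζ ζb z w : ℂ, D2 ψ (Q ζ ζb z w) (Qb ζ ζb z w) z w = ζb)
    (hu : ∀ ζ ζb z w : ℂ, u ζ ζb z w =
      Q ζ ζb z w * ζ + Qb ζ ζb z w * ζb - ψ (Q ζ ζb z w) (Qb ζ ζb z w) z w)
    (a b c d : ℂ) : D3 u a b c d = -(D3 ψ (Q a b c d) (Qb a b c d) c d) := by
  have e : (fun t => u a b t d) =
      fun t => Q a b t d * a + Qb a b t d * b - ψ (Q a b t d) (Qb a b t d) t d :=
    funext fun t => hu a b t d
  have h := (((hasD3 hQ a b c d).mul_const a).add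
      ((hasD3 hQb a b c d).mul_const b)).sub
      (chain4 hψ (hasD3 hQ a b c d) (hasD3 hQb a b c d)
        (hasDerivAt_id c) (hasDerivAt_const c d))
  have hv := h.deriv
  simp only [id_eq] at hv
  replace hv := (congrArg (deriv · c) e).trans hv
  show deriv (fun t => u a b t d) c = _
  rw [hv, hinv1 a b c d, hinv2 a b c d]
  ring

end main
lemma alg (A B C P R S T E x1 y1 x3 y3 x4 y4 ex : ℂ)
    (hΔ : A*C - B^2 ≠ 0)
    (rel1 : A*x1 + B*y1 = 0) (rel2 : B*x1 + C*y1 = 1)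
    (rel3 : A*x3 + B*y3 + P = 0) (rel4 : B*x3 + C*y3 + R = 0)
    (rel5 : A*x4 + B*y4 + S = 0) (rel6 : B*x4 + C*y4 + T = 0) :
    (x1 * -(P*x4 + R*y4 + E) - x4*y3 = -ex ↔ B*E - S*R = ex*(B^2 - A*C)) := by
  have E1 : (A*C - B^2) * x1 = -B := by linear_combination C * rel1 - B * rel2
  have E3 : (A*C - B^2) * y3 = B*P - A*R := by linear_combination A * rel4 - B * rel3
  have E4x : (A*C - B^2) * x4 = -(C*S - B*T) := by linear_combination C * rel5 - B * rel6
  have E4y : (A*C - B^2) * y4 = B*S - A*T := by linear_combination A * rel6 - B * rel5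
  have key : (A*C - B^2)^2 * (x1 * -(P*x4 + R*y4 + E) - x4*y3)
      = (A*C - B^2) * (B*E - S*R) := by
    linear_combination ((A*C-B^2) * (-(P*x4 + R*y4 + E))) * E1
      + (B*R) * E4y + (-((A*C-B^2) * x4)) * E3 + (A*R) * E4x
  have hΔ2 : (A*C - B^2)^2 ≠ 0 := pow_ne_zero 2 hΔ
  constructor
  · intro h
    rw [h] at key
    have h2 : (A*C-B^2) * (-ex) = B*E - S*R := mul_left_cancel₀ hΔ (by linear_combination key)
    linear_combination -h2
  · intro h
    have h3 : (A*C-B^2)^2 * (x1 * -(P*x4 + R*y4 + E) - x4*y3) = (A*C-B^2)^2 * (-ex) := by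
      linear_combination key + (A*C - B^2) * h
    exact mul_left_cancel₀ hΔ2 h3

/- STATEMENT 17: under the Legendre transformation ζ₁ = ψ_q, ζ̄₁ = ψ_q̄,
u = qψ_q + q̄ψ_q̄ − ψ (q = Q(ζ₁,ζ̄₁,z,z̄), q̄ = Qb(ζ₁,ζ̄₁,z,z̄) being the inverse
map), the equation u_{ζ₁ζ̄₁}u_{2 2̄} − u_{ζ₁2̄}u_{ζ̄₁2} = −e^{ζ₁+ζ̄₁} holds iff
ψ_{qq̄}ψ_{zz̄} − ψ_{qz̄}ψ_{q̄z} = e^{ψ_q+ψ_q̄}(ψ_{qq̄}² − ψ_{qq}ψ_{q̄q̄}) holds at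
the corresponding point.  Slots of ψ: 1 = q, 2 = q̄, 3 = z, 4 = z̄; slots of u:
1 = ζ₁, 2 = ζ̄₁, 3 = z, 4 = z̄. -/
theorem legendre_transform_of_hcma
    (ψ : F4) (hψ : Sm ψ)
    (Q Qb : F4) (hQ : Sm Q) (hQb : Sm Qb)
    -- Q, Qb invert the gradient map: ψ_q(Q,Qb,z,z̄) = ζ₁, ψ_q̄(Q,Qb,z,z̄) = ζ̄₁
    (hinv1 : ∀ ζ ζb z w : ℂ, D1 ψ (Q ζ ζb z w) (Qb ζ ζb z w) z w = ζ)
    (hinv2 : ∀ ζ ζb z w : ℂ, D2 ψ (Q ζ ζb z w) (Qb ζ ζb z w) z w = ζb)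
    -- nondegeneracy of the Hessian of ψ in (q, q̄)
    (hnondeg : ∀ q qb z w : ℂ,
      D1 (D1 ψ) q qb z w * D2 (D2 ψ) q qb z w - (D2 (D1 ψ) q qb z w) ^ 2 ≠ 0)
    (u : F4)
    (hu : ∀ ζ ζb z w : ℂ, u ζ ζb z w =
      Q ζ ζb z w * ζ + Qb ζ ζb z w * ζb - ψ (Q ζ ζb z w) (Qb ζ ζb z w) z w) :
    ∀ ζ ζb z w : ℂ,
      (D2 (D1 u) ζ ζb z w * D4 (D3 u) ζ ζb z w
         - D4 (D1 u) ζ ζb z w * D3 (D2 u) ζ ζb z w = -Complex.exp (ζ + ζb))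
      ↔
      (let q := Q ζ ζb z w
       let qb := Qb ζ ζb z w
       D2 (D1 ψ) q qb z w * D4 (D3 ψ) q qb z w
         - D4 (D1 ψ) q qb z w * D3 (D2 ψ) q qb z w
       = Complex.exp (D1 ψ q qb z w + D2 ψ q qb z w) *
           ((D2 (D1 ψ) q qb z w) ^ 2 - D1 (D1 ψ) q qb z w * D2 (D2 ψ) q qb z w)) := by
  intro ζ ζb z w
  have hq1 := hinv1 ζ ζb z w
  have hq2 := hinv2 ζ ζb z w
  -- second partials of u
  have h21 : D2 (D1 u) ζ ζb z w = D2 Q ζ ζb z w := by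
    have e : (fun t => D1 u ζ t z w) = fun t => Q ζ t z w :=
      funext fun t => Du1 ψ Q Qb u hψ hQ hQb hinv1 hinv2 hu ζ t z w
    show deriv (fun t => D1 u ζ t z w) ζb = _
    rw [e]; rfl
  have h41 : D4 (D1 u) ζ ζb z w = D4 Q ζ ζb z w := by
    have e : (fun t => D1 u ζ ζb z t) = fun t => Q ζ ζb z t :=
      funext fun t => Du1 ψ Q Qb u hψ hQ hQb hinv1 hinv2 hu ζ ζb z t
    show deriv (fun t => D1 u ζ ζb z t) w = _
    rw [e]; rfl
  have h32 : D3 (D2 u) ζ ζb z w = D3 Qb ζ ζb z w := by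
    have e : (fun t => D2 u ζ ζb t w) = fun t => Qb ζ ζb t w :=
      funext fun t => Du2 ψ Q Qb u hψ hQ hQb hinv1 hinv2 hu ζ ζb t w
    show deriv (fun t => D2 u ζ ζb t w) z = _
    rw [e]; rfl
  have h43 : D4 (D3 u) ζ ζb z w =
      -(D3 (D1 ψ) (Q ζ ζb z w) (Qb ζ ζb z w) z w * D4 Q ζ ζb z w
        + D3 (D2 ψ) (Q ζ ζb z w) (Qb ζ ζb z w) z w * D4 Qb ζ ζb z w
        + D4 (D3 ψ) (Q ζ ζb z w) (Qb ζ ζb z w) z w) := by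
    have e : (fun t => D3 u ζ ζb z t)
        = fun t => -(D3 ψ (Q ζ ζb z t) (Qb ζ ζb z t) z t) :=
      funext fun t => Du3 ψ Q Qb u hψ hQ hQb hinv1 hinv2 hu ζ ζb z t
    have h := (chain4 (smD3 hψ) (hasD4 hQ ζ ζb z w) (hasD4 hQb ζ ζb z w)
      (hasDerivAt_const w z) (hasDerivAt_id w)).neg
    have hv := h.deriv
    simp only [id_eq] at hv
    show deriv (fun t => D3 u ζ ζb z t) w = _
    rw [e, show (fun t => -D3 ψ (Q ζ ζb z t) (Qb ζ ζb z t) z t) = -fun s => D3 ψ (Q ζ ζb z s) (Qb ζ ζb z s) z s from rfl, hv, sym13 hψ, sym23 hψ]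
    ring
  -- relations from differentiating the inversion identities
  have rel1 : D1 (D1 ψ) (Q ζ ζb z w) (Qb ζ ζb z w) z w * D2 Q ζ ζb z w
      + D2 (D1 ψ) (Q ζ ζb z w) (Qb ζ ζb z w) z w * D2 Qb ζ ζb z w = 0 := by
    have h := chain4 (smD1 hψ) (hasD2 hQ ζ ζb z w) (hasD2 hQb ζ ζb z w)
      (hasDerivAt_const ζb z) (hasDerivAt_const ζb w)
    have e : (fun t => D1 ψ (Q ζ t z w) (Qb ζ t z w) z w) = fun _ => ζ :=
      funext fun t => hinv1 ζ t z w
    rw [e] at h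
    have h0 := h.unique (hasDerivAt_const ζb ζ)
    linear_combination h0
  have rel2 : D2 (D1 ψ) (Q ζ ζb z w) (Qb ζ ζb z w) z w * D2 Q ζ ζb z w
      + D2 (D2 ψ) (Q ζ ζb z w) (Qb ζ ζb z w) z w * D2 Qb ζ ζb z w = 1 := by
    have h := chain4 (smD2 hψ) (hasD2 hQ ζ ζb z w) (hasD2 hQb ζ ζb z w)
      (hasDerivAt_const ζb z) (hasDerivAt_const ζb w)
    have e : (fun t => D2 ψ (Q ζ t z w) (Qb ζ t z w) z w) = fun t => t :=
      funext fun t => hinv2 ζ t z w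
    rw [e] at h
    have h0 := h.unique (hasDerivAt_id ζb)
    rw [sym12 hψ] at h0
    linear_combination h0
  have rel3 : D1 (D1 ψ) (Q ζ ζb z w) (Qb ζ ζb z w) z w * D3 Q ζ ζb z w
      + D2 (D1 ψ) (Q ζ ζb z w) (Qb ζ ζb z w) z w * D3 Qb ζ ζb z w
      + D3 (D1 ψ) (Q ζ ζb z w) (Qb ζ ζb z w) z w = 0 := by
    have h := chain4 (smD1 hψ) (hasD3 hQ ζ ζb z w) (hasD3 hQb ζ ζb z w)
      (hasDerivAt_id z) (hasDerivAt_const z w)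
    have e : (fun t => D1 ψ (Q ζ ζb t w) (Qb ζ ζb t w) t w) = fun _ => ζ :=
      funext fun t => hinv1 ζ ζb t w
    simp only [id_eq] at h
    rw [e] at h
    have h0 := h.unique (hasDerivAt_const z ζ)
    linear_combination h0
  have rel4 : D2 (D1 ψ) (Q ζ ζb z w) (Qb ζ ζb z w) z w * D3 Q ζ ζb z w
      + D2 (D2 ψ) (Q ζ ζb z w) (Qb ζ ζb z w) z w * D3 Qb ζ ζb z w
      + D3 (D2 ψ) (Q ζ ζb z w) (Qb ζ ζb z w) z w = 0 := by
    have h := chain4 (smD2 hψ) (hasD3 hQ ζ ζb z w) (hasD3 hQb ζ ζb z w)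
      (hasDerivAt_id z) (hasDerivAt_const z w)
    have e : (fun t => D2 ψ (Q ζ ζb t w) (Qb ζ ζb t w) t w) = fun _ => ζb :=
      funext fun t => hinv2 ζ ζb t w
    simp only [id_eq] at h
    rw [e] at h
    have h0 := h.unique (hasDerivAt_const z ζb)
    rw [sym12 hψ] at h0
    linear_combination h0
  have rel5 : D1 (D1 ψ) (Q ζ ζb z w) (Qb ζ ζb z w) z w * D4 Q ζ ζb z w
      + D2 (D1 ψ) (Q ζ ζb z w) (Qb ζ ζb z w) z w * D4 Qb ζ ζb z w
      + D4 (D1 ψ) (Q ζ ζb z w) (Qb ζ ζb z w) z w = 0 := by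
    have h := chain4 (smD1 hψ) (hasD4 hQ ζ ζb z w) (hasD4 hQb ζ ζb z w)
      (hasDerivAt_const w z) (hasDerivAt_id w)
    have e : (fun t => D1 ψ (Q ζ ζb z t) (Qb ζ ζb z t) z t) = fun _ => ζ :=
      funext fun t => hinv1 ζ ζb z t
    simp only [id_eq] at h
    rw [e] at h
    have h0 := h.unique (hasDerivAt_const w ζ)
    linear_combination h0
  have rel6 : D2 (D1 ψ) (Q ζ ζb z w) (Qb ζ ζb z w) z w * D4 Q ζ ζb z w
      + D2 (D2 ψ) (Q ζ ζb z w) (Qb ζ ζb z w) z w * D4 Qb ζ ζb z w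
      + D4 (D2 ψ) (Q ζ ζb z w) (Qb ζ ζb z w) z w = 0 := by
    have h := chain4 (smD2 hψ) (hasD4 hQ ζ ζb z w) (hasD4 hQb ζ ζb z w)
      (hasDerivAt_const w z) (hasDerivAt_id w)
    have e : (fun t => D2 ψ (Q ζ ζb z t) (Qb ζ ζb z t) z t) = fun _ => ζb :=
      funext fun t => hinv2 ζ ζb z t
    simp only [id_eq] at h
    rw [e] at h
    have h0 := h.unique (hasDerivAt_const w ζb)
    rw [sym12 hψ] at h0
    linear_combination h0
  have hΔ := hnondeg (Q ζ ζb z w) (Qb ζ ζb z w) z w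
  show (D2 (D1 u) ζ ζb z w * D4 (D3 u) ζ ζb z w
         - D4 (D1 u) ζ ζb z w * D3 (D2 u) ζ ζb z w = -Complex.exp (ζ + ζb))
      ↔ (D2 (D1 ψ) (Q ζ ζb z w) (Qb ζ ζb z w) z w
            * D4 (D3 ψ) (Q ζ ζb z w) (Qb ζ ζb z w) z w
         - D4 (D1 ψ) (Q ζ ζb z w) (Qb ζ ζb z w) z w
            * D3 (D2 ψ) (Q ζ ζb z w) (Qb ζ ζb z w) z w
       = Complex.exp (D1 ψ (Q ζ ζb z w) (Qb ζ ζb z w) z w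
            + D2 ψ (Q ζ ζb z w) (Qb ζ ζb z w) z w) *
           ((D2 (D1 ψ) (Q ζ ζb z w) (Qb ζ ζb z w) z w) ^ 2
            - D1 (D1 ψ) (Q ζ ζb z w) (Qb ζ ζb z w) z w
              * D2 (D2 ψ) (Q ζ ζb z w) (Qb ζ ζb z w) z w))
  rw [h21, h41, h32, h43, hq1, hq2]
  exact alg _ _ _ _ _ _ _ _ _ _ _ _ _ _ _
    hΔ rel1 rel2 rel3 rel4 rel5 rel6
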